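/- For any metric Jordan curve Γ, the diameter distance dd(x,y) := diam Γ[x,y], where Γ[x,y] is the subarc of smaller diameter between x and y, defines a metric on Γ. -/

import Mathlib

open Metric Set

noncomputable section

abbrev S1 := AddCircle (1 : ℝ)

/-- The closed arc on the unit circle from `x` counterclockwise to `y`. -/
def arcCCW (x y : S1) : Set S1 :=
  (fun t : ℝ => x + (t : S1)) '' Set.Icc 0 ((AddCircle.equivIco 1 0 (y - x) : ℝ))

/-- The diameter distance on a Jordan curve `Γ` parametrized by `e : S1 ≃ₜ Γ`:
the diameter of the subarc of smaller diameter between `x` and `y`. -/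
def ddist {Γ : Type*} [MetricSpace Γ] (e : S1 ≃ₜ Γ) (x y : Γ) : ℝ :=
  min (diam (e '' arcCCW (e.symm x) (e.symm y))) (diam (e '' arcCCW (e.symm y) (e.symm x)))

/-- `f` is an `H`-weak-quasisymmetry. -/
def IsWeakQS {X Y : Type*} [MetricSpace X] [MetricSpace Y] (f : X → Y) (H : ℝ) : Prop :=
  ∀ x y z : X, dist x y ≤ dist x z → dist (f x) (f y) ≤ H * dist (f x) (f z)

/-! ### Auxiliary lemmas about arcs on `S1` -/

/-- The canonical representative in `[0,1)` of a point of `S1`. -/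
noncomputable def fr (z : S1) : ℝ := (AddCircle.equivIco 1 0 z : ℝ)

lemma fr_mem (z : S1) : fr z ∈ Set.Ico (0:ℝ) 1 := by
  have := (AddCircle.equivIco 1 0 z).2; simpa [fr] using this

lemma fr_coe (z : S1) : ((fr z : ℝ) : S1) = z :=
  (AddCircle.equivIco 1 0).symm_apply_apply z

lemma fr_of_mem {u : ℝ} (hu : u ∈ Set.Ico (0:ℝ) 1) : fr ((u : ℝ) : S1) = u := by
  simp only [fr, AddCircle.equivIco, QuotientAddGroup.equivIcoMod_coe]
  exact (toIcoMod_eq_self one_pos).2 (by rwa [zero_add])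

lemma coeS1_add (u v : ℝ) : ((u + v : ℝ) : S1) = (u:S1) + (v:S1) := rfl
lemma coeS1_sub (u v : ℝ) : ((u - v : ℝ) : S1) = (u:S1) - (v:S1) := rfl
lemma coeS1_zero : ((0:ℝ):S1) = 0 := rfl
lemma coeS1_one : ((1:ℝ):S1) = 0 := by
  rw [AddCircle.coe_eq_zero_iff]; exact ⟨1, by simp⟩

lemma arc_def (a b : S1) : arcCCW a b = (fun t : ℝ => a + (t : S1)) '' Set.Icc 0 (fr (b - a)) := rfl

lemma mem_arc_iff {a b z : S1} :
    z ∈ arcCCW a b ↔ ∃ u : ℝ, 0 ≤ u ∧ u ≤ fr (b - a) ∧ a + (u : S1) = z := by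
  constructor
  · rintro ⟨u, ⟨h0, h1⟩, rfl⟩; exact ⟨u, h0, h1, rfl⟩
  · rintro ⟨u, h0, h1, rfl⟩; exact ⟨u, ⟨h0, h1⟩, rfl⟩

lemma self_mem_arc (a b : S1) : a ∈ arcCCW a b :=
  mem_arc_iff.2 ⟨0, le_refl _, (fr_mem _).1, by rw [coeS1_zero, add_zero]⟩

lemma right_mem_arc (a b : S1) : b ∈ arcCCW a b :=
  mem_arc_iff.2 ⟨fr (b - a), (fr_mem _).1, le_refl _, by rw [fr_coe]; abel⟩

/-- If `c` lies on the CCW arc from `a` to `b`, the CCW arc from `a` to `c` is a subarc. -/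
lemma arc_subset_of_mem {a b c : S1} (h : c ∈ arcCCW a b) : arcCCW a c ⊆ arcCCW a b := by
  obtain ⟨u, h0, h1, rfl⟩ := mem_arc_iff.1 h
  have hu : u ∈ Set.Ico (0:ℝ) 1 := ⟨h0, lt_of_le_of_lt h1 (fr_mem _).2⟩
  have hfr : fr (a + (u:S1) - a) = u := by rw [add_sub_cancel_left, fr_of_mem hu]
  rw [arc_def, arc_def, hfr]
  exact Set.image_mono (Set.Icc_subset_Icc_right h1)

/-- If `c` lies on the CCW arc from `a` to `b`, the CCW arc from `c` to `b` is a subarc. -/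
lemma arc_subset_of_mem' {a b c : S1} (h : c ∈ arcCCW a b) : arcCCW c b ⊆ arcCCW a b := by
  obtain ⟨u, h0, h1, rfl⟩ := mem_arc_iff.1 h
  have ht := fr_mem (b - a)
  have hfr : fr (b - (a + (u:S1))) = fr (b - a) - u := by
    have h2 : b - (a + (u:S1)) = ((fr (b - a) - u : ℝ) : S1) := by
      rw [coeS1_sub, fr_coe]; abel
    rw [h2, fr_of_mem ⟨by linarith [h1], by linarith [ht.2]⟩]
  intro z hz
  obtain ⟨v, hv0, hv1, rfl⟩ := mem_arc_iff.1 hz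
  rw [hfr] at hv1
  refine mem_arc_iff.2 ⟨u + v, by linarith, by linarith, ?_⟩
  rw [coeS1_add]; abel

/-- Either `c` is on the CCW arc from `a` to `b`, or `a` is on the CCW arc from `c` to `b`. -/
lemma mem_or_mem (a b c : S1) : c ∈ arcCCW a b ∨ a ∈ arcCCW c b := by
  have hts := fr_mem (b - a)
  have hss := fr_mem (c - a)
  rcases le_or_gt (fr (c - a)) (fr (b - a)) with h | h
  · left; exact mem_arc_iff.2 ⟨fr (c - a), hss.1, h, by rw [fr_coe]; abel⟩
  · right
    have hbc : fr (b - c) = fr (b - a) - fr (c - a) + 1 := by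
      have h2 : b - c = ((fr (b - a) - fr (c - a) + 1 : ℝ) : S1) := by
        rw [coeS1_add, coeS1_sub, coeS1_one, fr_coe, fr_coe]; abel
      rw [h2, fr_of_mem ⟨by linarith [hss.2, hts.1], by linarith⟩]
    refine mem_arc_iff.2 ⟨1 - fr (c - a), by linarith [hss.2], by rw [hbc]; linarith [hts.1], ?_⟩
    have h3 : c + ((1 - fr (c - a) : ℝ) : S1) = c - ((fr (c - a) :ℝ):S1) := by
      rw [coeS1_sub, coeS1_one]; abel
    rw [h3, fr_coe]; abel

/-- Either `b` is on the CCW arc from `a` to `c`, or `c` is on the CCW arc from `a` to `b`. -/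
lemma mem_or_mem' (a b c : S1) : b ∈ arcCCW a c ∨ c ∈ arcCCW a b := by
  rcases le_or_gt (fr (b - a)) (fr (c - a)) with h | h
  · left; exact mem_arc_iff.2 ⟨fr (b - a), (fr_mem _).1, h, by rw [fr_coe]; abel⟩
  · right; exact mem_arc_iff.2 ⟨fr (c - a), (fr_mem _).1, le_of_lt h, by rw [fr_coe]; abel⟩

/-- The CCW arc from `a` to `c` is covered by the arcs from `a` to `b` and `b` to `c`. -/
lemma arc_subset_union (a b c : S1) : arcCCW a c ⊆ arcCCW a b ∪ arcCCW b c := by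
  have h1 := fr_mem (b - a); have h2 := fr_mem (c - b); have h3 := fr_mem (c - a)
  have key : fr (c - a) ≤ fr (b - a) + fr (c - b) := by
    have hz : ((fr (b - a) + fr (c - b) - fr (c - a) : ℝ) : S1) = 0 := by
      rw [coeS1_sub, coeS1_add, fr_coe, fr_coe, fr_coe]; abel
    obtain ⟨n, hn⟩ := (AddCircle.coe_eq_zero_iff (1:ℝ)).1 hz
    rw [zsmul_eq_mul, mul_one] at hn
    have hn0 : (0:ℝ) ≤ n := by
      have hlt : (-1 : ℝ) < n := by rw [hn]; linarith [h1.1, h2.1, h3.2]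
      have hlt2 : (-1 : ℤ) < n := by exact_mod_cast hlt
      have : (0:ℤ) ≤ n := by omega
      exact_mod_cast this
    linarith [hn]
  intro z hz
  obtain ⟨u, hu0, hu1, rfl⟩ := mem_arc_iff.1 hz
  rcases le_or_gt u (fr (b - a)) with h | h
  · exact Or.inl (mem_arc_iff.2 ⟨u, hu0, h, rfl⟩)
  · refine Or.inr (mem_arc_iff.2 ⟨u - fr (b - a), by linarith, by linarith, ?_⟩)
    rw [coeS1_sub, fr_coe]; abel

lemma arc_isCompact (a b : S1) : IsCompact (arcCCW a b) :=
  isCompact_Icc.image (continuous_const.add (AddCircle.continuous_mk' 1))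

lemma arc_self (a : S1) : arcCCW a a = {a} := by
  rw [arc_def]
  have h0 : fr (a - a) = 0 := by
    rw [sub_self]
    have h : ((0:ℝ):S1) = (0:S1) := rfl
    rw [← h, fr_of_mem ⟨le_refl _, one_pos⟩]
  rw [h0, Set.Icc_self, Set.image_singleton]
  norm_num

section

variable {Γ : Type*} [MetricSpace Γ] (e : S1 ≃ₜ Γ)

lemma earc_isBounded (a b : S1) : Bornology.IsBounded (e '' arcCCW a b) :=
  ((arc_isCompact a b).image e.continuous).isBounded

lemma ediam_mono {a b c d : S1} (h : arcCCW a b ⊆ arcCCW c d) :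
    diam (e '' arcCCW a b) ≤ diam (e '' arcCCW c d) :=
  diam_mono (Set.image_mono h) (earc_isBounded e c d)

/-- Triangle inequality for diameters of CCW arcs. -/
lemma ediam_triangle (p q r : S1) :
    diam (e '' arcCCW p r) ≤ diam (e '' arcCCW p q) + diam (e '' arcCCW q r) := by
  have hsub : e '' arcCCW p r ⊆ e '' arcCCW p q ∪ e '' arcCCW q r := by
    rw [← Set.image_union]; exact Set.image_mono (arc_subset_union p q r)
  have hb : Bornology.IsBounded (e '' arcCCW p q ∪ e '' arcCCW q r) :=
    (earc_isBounded e p q).union (earc_isBounded e q r)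
  calc diam (e '' arcCCW p r) ≤ diam (e '' arcCCW p q ∪ e '' arcCCW q r) :=
        diam_mono hsub hb
    _ ≤ _ := diam_union' ⟨e q, ⟨q, right_mem_arc p q, rfl⟩, ⟨q, self_mem_arc q r, rfl⟩⟩

end

/-- The diameter distance `dd` is a metric on a metric Jordan curve `Γ`. -/
theorem ddist_is_metric {Γ : Type*} [MetricSpace Γ] (e : S1 ≃ₜ Γ) :
    (∀ x : Γ, ddist e x x = 0) ∧
    (∀ x y : Γ, x ≠ y → 0 < ddist e x y) ∧
    (∀ x y : Γ, ddist e x y = ddist e y x) ∧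
    (∀ x y z : Γ, ddist e x z ≤ ddist e x y + ddist e y z) := by
  refine ⟨?_, ?_, ?_, ?_⟩
  · intro x
    simp [ddist, arc_self, Set.image_singleton]
  · intro x y hxy
    have hd : (0:ℝ) < dist x y := dist_pos.2 hxy
    have key : ∀ a b : S1, dist (e a) (e b) ≤ diam (e '' arcCCW a b) := by
      intro a b
      exact dist_le_diam_of_mem (earc_isBounded e a b)
        ⟨a, self_mem_arc a b, rfl⟩ ⟨b, right_mem_arc a b, rfl⟩
    have k1 := key (e.symm x) (e.symm y)
    have k2 := key (e.symm y) (e.symm x)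
    rw [e.apply_symm_apply, e.apply_symm_apply] at k1 k2
    rw [dist_comm] at k2
    exact lt_min (lt_of_lt_of_le hd k1) (lt_of_lt_of_le hd k2)
  · intro x y
    exact min_comm _ _
  · intro x y z
    simp only [ddist]
    set a := e.symm x
    set b := e.symm y
    set c := e.symm z
    rcases le_total (diam (e '' arcCCW a b)) (diam (e '' arcCCW b a)) with hab | hab <;>
      rcases le_total (diam (e '' arcCCW b c)) (diam (e '' arcCCW c b)) with hbc | hbc
    · rw [min_eq_left hab, min_eq_left hbc]
      exact le_trans (min_le_left _ _) (ediam_triangle e a b c)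
    · rw [min_eq_left hab, min_eq_right hbc]
      rcases mem_or_mem a b c with h | h
      · refine le_trans (min_le_left _ _) ?_
        have := ediam_mono e (arc_subset_of_mem h)
        linarith [diam_nonneg (s := e '' arcCCW c b)]
      · refine le_trans (min_le_right _ _) ?_
        have := ediam_mono e (arc_subset_of_mem h)
        linarith [diam_nonneg (s := e '' arcCCW a b)]
    · rw [min_eq_right hab, min_eq_left hbc]
      rcases mem_or_mem' b a c with h | h
      · refine le_trans (min_le_left _ _) ?_
        have := ediam_mono e (arc_subset_of_mem' h)
        linarith [diam_nonneg (s := e '' arcCCW b a)]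
      · refine le_trans (min_le_right _ _) ?_
        have := ediam_mono e (arc_subset_of_mem' h)
        linarith [diam_nonneg (s := e '' arcCCW b c)]
    · rw [min_eq_right hab, min_eq_right hbc]
      refine le_trans (min_le_right _ _) ?_
      calc diam (e '' arcCCW c a) ≤ diam (e '' arcCCW c b) + diam (e '' arcCCW b a) :=
            ediam_triangle e c b a
        _ = diam (e '' arcCCW b a) + diam (e '' arcCCW c b) := add_comm _ _
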